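/- Let R be a commutative ring such that every regular nonunit of R[X] is a product of irreducible elements and any two factorizations of a regular nonunit into irreducibles are homomorphic. If a, b ∈ R are nonzero with ab = 0, then a contradiction arises; hence if R is additionally indecomposable, R is an integral domain. -/
import Mathlib


/-- An element `a` of a commutative ring `S` is irreducible if it is a nonunit and
whenever `a = b * c`, then `(a) = (b)` or `(a) = (c)`. -/
def IrredAssoc {S : Type*} [CommRing S] (a : S) : Prop :=
  ¬IsUnit a ∧ ∀ b c : S, a = b * c →
    Ideal.span {a} = Ideal.span {b} ∨ Ideal.span {a} = Ideal.span {c}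

open Polynomial in
lemma irredAssoc_X_sub_C {R : Type*} [CommRing R] [Nontrivial R]
    (hind : ∀ e : R, e * e = e → e = 0 ∨ e = 1) (c : R) :
    IrredAssoc (X - C c : Polynomial R) := by
  constructor
  · intro h
    have h0 : IsUnit (Polynomial.eval c (X - C c)) := h.map (evalRingHom c)
    simp [isUnit_zero_iff] at h0
  · intro p q hpq
    have h0 : eval c p * eval c q = 0 := by
      have := congrArg (eval c) hpq
      simpa using this.symm
    have h1 : eval c (derivative p) * eval c q + eval c p * eval c (derivative q) = 1 := by
      have := congrArg (fun r => eval c (derivative r)) hpq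
      simpa [derivative_mul] using this.symm
    set u : R := eval c (derivative p) * eval c q with hu
    have hidem : u * u = u := by
      have : u * (u + eval c p * eval c (derivative q)) = u * 1 := by rw [h1]
      calc u * u = u * (u + eval c p * eval c (derivative q)) -
            eval c (derivative p) * eval c (derivative q) * (eval c p * eval c q) := by
              rw [hu]; ring
        _ = u := by rw [this, h0]; ring
    have hdvd : (X - C c) ∣ p ∨ (X - C c) ∣ q := by
      rcases hind u hidem with h | h
      · right
        rw [dvd_iff_isRoot, IsRoot.def]
        have hv : eval c p * eval c (derivative q) = 1 := by
          rw [← h1, h, zero_add]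
        calc eval c q = eval c q * (eval c p * eval c (derivative q)) := by rw [hv, mul_one]
          _ = eval c (derivative q) * (eval c p * eval c q) := by ring
          _ = 0 := by rw [h0, mul_zero]
      · left
        rw [dvd_iff_isRoot, IsRoot.def]
        calc eval c p = eval c p * (eval c (derivative p) * eval c q) := by
              rw [← hu, h, mul_one]
          _ = eval c (derivative p) * (eval c p * eval c q) := by ring
          _ = 0 := by rw [h0, mul_zero]
    rcases hdvd with hd | hd
    · left
      apply le_antisymm
      · rw [Ideal.span_singleton_le_span_singleton]
        exact ⟨q, hpq⟩
      · rw [Ideal.span_singleton_le_span_singleton]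
        exact hd
    · right
      apply le_antisymm
      · rw [Ideal.span_singleton_le_span_singleton]
        exact ⟨p, by rw [hpq]; ring⟩
      · rw [Ideal.span_singleton_le_span_singleton]
        exact hd

theorem domain_of_regular_factorizations_homomorphic {R : Type*} [CommRing R] [Nontrivial R]
    (hatomic : ∀ f : Polynomial R, (∀ c : Polynomial R, c * f = 0 → c = 0) → ¬IsUnit f →
      ∃ l : Multiset (Polynomial R), (∀ g ∈ l, IrredAssoc g) ∧ l.prod = f)
    (hhom : ∀ f : Polynomial R, (∀ c : Polynomial R, c * f = 0 → c = 0) → ¬IsUnit f →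
      ∀ l₁ l₂ : Multiset (Polynomial R),
        (∀ g ∈ l₁, IrredAssoc g) → (∀ g ∈ l₂, IrredAssoc g) →
        l₁.prod = f → l₂.prod = f →
        (∀ g ∈ l₁, ∃ h ∈ l₂, Ideal.span {g} = Ideal.span {h}) ∧
        (∀ g ∈ l₂, ∃ h ∈ l₁, Ideal.span {g} = Ideal.span {h}))
    (hind : ∀ e : R, e * e = e → e = 0 ∨ e = 1) :
    IsDomain R := by
  classical
  open Polynomial in
  have nzd : ∀ a b : R, a * b = 0 → a = 0 ∨ b = 0 := by
    intro a b hab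
    by_contra hcon
    push_neg at hcon
    obtain ⟨ha, hb⟩ := hcon
    set f : Polynomial R := (X - C a) * (X - C b) with hf
    have hmon : f.Monic := (monic_X_sub_C a).mul (monic_X_sub_C b)
    have hreg : ∀ c : Polynomial R, c * f = 0 → c = 0 := by
      intro c hc
      rw [mul_comm] at hc
      exact (Polynomial.Monic.mul_right_eq_zero_iff hmon).mp hc
    have hnu : ¬IsUnit f := by
      intro h
      have h0 : IsUnit (Polynomial.eval a f) := h.map (evalRingHom a)
      simp [hf, isUnit_zero_iff] at h0
    have heq : f = X * (X - C (a + b)) := by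
      have hC : (C a) * (C b) = 0 := by rw [← C_mul, hab, C_0]
      calc f = X * (X - (C a + C b)) + C a * C b := by rw [hf]; ring
        _ = X * (X - C (a + b)) := by rw [hC, add_zero, C_add]
    have hirr1 : ∀ g ∈ ({X - C a, X - C b} : Multiset (Polynomial R)), IrredAssoc g := by
      intro g hg
      rw [Multiset.insert_eq_cons, Multiset.mem_cons, Multiset.mem_singleton] at hg
      obtain rfl | rfl := hg
      · exact irredAssoc_X_sub_C hind a
      · exact irredAssoc_X_sub_C hind b
    have hirr2 : ∀ g ∈ ({X, X - C (a + b)} : Multiset (Polynomial R)), IrredAssoc g := by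
      intro g hg
      rw [Multiset.insert_eq_cons, Multiset.mem_cons, Multiset.mem_singleton] at hg
      obtain rfl | rfl := hg
      · simpa using irredAssoc_X_sub_C hind 0
      · exact irredAssoc_X_sub_C hind (a + b)
    obtain ⟨-, h2⟩ := hhom f hreg hnu {X - C a, X - C b} {X, X - C (a + b)} hirr1 hirr2
      (by simp [hf]) (by simp [heq])
    obtain ⟨h, hmem, hspan⟩ := h2 X (by simp)
    have key : ∀ c : R, Ideal.span {(X : Polynomial R)} = Ideal.span {X - C c} → c = 0 := by
      intro c hsp
      have hXd : (X : Polynomial R) ∣ (X - C c) := by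
        rw [← Ideal.span_singleton_le_span_singleton, hsp]
      rw [X_dvd_iff] at hXd
      simpa using hXd
    rw [Multiset.insert_eq_cons, Multiset.mem_cons, Multiset.mem_singleton] at hmem
    obtain rfl | rfl := hmem
    · exact ha (key a hspan)
    · exact hb (key b hspan)
  have : NoZeroDivisors R := ⟨fun {a b} h => nzd a b h⟩
  exact NoZeroDivisors.to_isDomain R
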